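/- Let H, W, B, K, H', W' be positive natural numbers with H' = H − K + 1 and W' = W − K + 1. Let δ : Fin H × Fin W × Fin B → ℝ and let 𝒲 : Fin K × Fin K → ℝ be a kernel. Define the (valid, per-batch-element, two-dimensional) convolution C : Fin H' × Fin W' × Fin B → ℝ by C(p₁, p₂, b) = ∑_{u∈Fin K} ∑_{v∈Fin K} δ(p₁+u, p₂+v, b) · 𝒲(u, v). Then ∑_{p₁,p₂,b} C(p₁,p₂,b)² ≤ K² · (∑_{u,v} 𝒲(u,v)²) · (∑_{h,w,b} δ(h,w,b)²), i.e. ‖δ ∗ 𝒲‖₂² ≤ K² ‖𝒲‖₂² ‖δ‖₂². -/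
import Mathlib


open Finset

lemma sum_comp_inj_le {α β : Type*} [Fintype α] [Fintype β] [DecidableEq β] (ι : α → β)
    (hinj : Function.Injective ι) (f : β → ℝ) (hf : ∀ b, 0 ≤ f b) :
    ∑ a : α, f (ι a) ≤ ∑ b : β, f b := by
  have h1 : ∑ a : α, f (ι a) = ∑ b ∈ Finset.univ.image ι, f b :=
    (Finset.sum_image (fun a _ b _ h => hinj h)).symm
  rw [h1]
  exact Finset.sum_le_sum_of_subset_of_nonneg (Finset.subset_univ _) fun b _ _ => hf b

/-- The squared L₂ norm of a valid 2-D convolution (applied per batch element) is bounded by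
`K² ‖𝒲‖₂² ‖δ‖₂²`. -/
theorem conv2d_sq_norm_le
    (H W B K H' W' : ℕ) (hH : 0 < H) (hW : 0 < W) (hB : 0 < B) (hK : 0 < K)
    (hH'pos : 0 < H') (hW'pos : 0 < W') (hKH : K ≤ H) (hKW : K ≤ W)
    (hH' : H' = H - K + 1) (hW' : W' = W - K + 1)
    (δ : Fin H × Fin W × Fin B → ℝ) (𝒲 : Fin K × Fin K → ℝ)
    (C : Fin H' × Fin W' × Fin B → ℝ)
    (hC : ∀ (p₁ : Fin H') (p₂ : Fin W') (b : Fin B),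
      C (p₁, p₂, b) = ∑ u : Fin K, ∑ v : Fin K,
        δ (⟨p₁.val + u.val, by have := p₁.isLt; have := u.isLt; omega⟩,
           ⟨p₂.val + v.val, by have := p₂.isLt; have := v.isLt; omega⟩, b) * 𝒲 (u, v)) :
    ∑ p : Fin H' × Fin W' × Fin B, (C p) ^ 2
      ≤ (K : ℝ) ^ 2 * (∑ uv : Fin K × Fin K, (𝒲 uv) ^ 2)
          * (∑ x : Fin H × Fin W × Fin B, (δ x) ^ 2) := by
  set SW := ∑ uv : Fin K × Fin K, (𝒲 uv) ^ 2 with hSW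
  have hSWnn : 0 ≤ SW := Finset.sum_nonneg fun _ _ => sq_nonneg _
  -- the shift map
  set shift : Fin K × Fin K → (Fin H' × Fin W' × Fin B) → (Fin H × Fin W × Fin B) :=
    fun uv p =>
      (⟨p.1.val + uv.1.val, by have := p.1.isLt; have := uv.1.isLt; omega⟩,
       ⟨p.2.1.val + uv.2.val, by have := p.2.1.isLt; have := uv.2.isLt; omega⟩, p.2.2) with hshift
  have hinj : ∀ uv, Function.Injective (shift uv) := by
    intro uv a b hab
    simp only [hshift, Prod.ext_iff, Fin.ext_iff] at hab ⊢
    omega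
  -- pointwise Cauchy–Schwarz
  have key : ∀ p : Fin H' × Fin W' × Fin B,
      (C p) ^ 2 ≤ (∑ uv : Fin K × Fin K, (δ (shift uv p)) ^ 2) * SW := by
    rintro ⟨p₁, p₂, b⟩
    rw [hC]
    have h1 : (∑ u : Fin K, ∑ v : Fin K,
        δ (⟨p₁.val + u.val, by have := p₁.isLt; have := u.isLt; omega⟩,
           ⟨p₂.val + v.val, by have := p₂.isLt; have := v.isLt; omega⟩, b) * 𝒲 (u, v))
        = ∑ uv : Fin K × Fin K, δ (shift uv (p₁, p₂, b)) * 𝒲 uv := by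
      rw [Fintype.sum_prod_type]
    rw [h1]
    simpa [hSW] using Finset.sum_mul_sq_le_sq_mul_sq Finset.univ
      (fun uv : Fin K × Fin K => δ (shift uv (p₁, p₂, b))) (fun uv => 𝒲 uv)
  calc ∑ p : Fin H' × Fin W' × Fin B, (C p) ^ 2
      ≤ ∑ p : Fin H' × Fin W' × Fin B,
          (∑ uv : Fin K × Fin K, (δ (shift uv p)) ^ 2) * SW :=
        Finset.sum_le_sum fun p _ => key p
    _ = (∑ uv : Fin K × Fin K, ∑ p : Fin H' × Fin W' × Fin B, (δ (shift uv p)) ^ 2) * SW := by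
        rw [← Finset.sum_mul, Finset.sum_comm]
    _ ≤ (∑ _uv : Fin K × Fin K, ∑ x : Fin H × Fin W × Fin B, (δ x) ^ 2) * SW := by
        refine mul_le_mul_of_nonneg_right (Finset.sum_le_sum fun uv _ => ?_) hSWnn
        exact sum_comp_inj_le (shift uv) (hinj uv) (fun x => (δ x) ^ 2)
          (fun x => sq_nonneg _)
    _ = (K : ℝ) ^ 2 * SW * (∑ x : Fin H × Fin W × Fin B, (δ x) ^ 2) := by
        simp [Finset.sum_const]; ring
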